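/- Let N ≥ 2 and let d₀, d₁, …, d_N be positive natural numbers. For i = 0, …, N−1 let W^{(i)} be a real d_{i+1} × d_i matrix, b^{(i)} ∈ ℝ^{d_{i+1}}, and let σ_i : ℝ → ℝ be twice continuously differentiable, applied componentwise. Define, for an input x ∈ ℝ^{d₀}: a^{(−1)} = x, z^{(i)} = W^{(i)} a^{(i−1)} + b^{(i)}, and a^{(i)} = σ_i(z^{(i)}) for i = 0, …, N−1. Define B^{(0)} = W^{(0)} and B^{(i)} = W^{(i)} · diag( σ'_{i−1}(z^{(i−1)}) ) · B^{(i−1)} for i ≥ 1; and for 1 ≤ k ≤ N−1 define F^{(k,k−1)} = W^{(k)} and F^{(k,i)} = W^{(k)} · diag( σ'_{k−1}(z^{(k−1)}) ) · F^{(k−1,i)} for i ≤ k−2. Then for every output index j, the Hessian matrix of the j-th coordinate of x ↦ z^{(N−1)}(x) equals Σ_{i=0}^{N−2} (B^{(i)})ᵀ · diag( F_j^{(N−1,i)} ⊙ σ''_i(z^{(i)}) ) · B^{(i)}, where F_j^{(N−1,i)} denotes the j-th row of F^{(N−1,i)}, ⊙ is the componentwise (Hadamard) product, and σ''_i is applied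 componentwise to z^{(i)}(x). -/

import Mathlib

open Matrix

/-- The pre-activation vectors `z^{(i)}` of a feedforward network:
`a^{(-1)} = x`, `z^{(i)} = W^{(i)} a^{(i-1)} + b^{(i)}`, `a^{(i)} = σ_i(z^{(i)})`. -/
noncomputable def netZ (d : ℕ → ℕ)
    (W : ∀ i : ℕ, Matrix (Fin (d (i + 1))) (Fin (d i)) ℝ)
    (b : ∀ i : ℕ, Fin (d (i + 1)) → ℝ)
    (σ : ℕ → ℝ → ℝ) (x : Fin (d 0) → ℝ) : ∀ i : ℕ, Fin (d (i + 1)) → ℝ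
  | 0 => W 0 *ᵥ x + b 0
  | i + 1 => W (i + 1) *ᵥ (fun k => σ i (netZ d W b σ x i k)) + b (i + 1)

/-- The matrices `B^{(i)}`: `B^{(0)} = W^{(0)}` and
`B^{(i)} = W^{(i)} · diag(σ'_{i-1}(z^{(i-1)})) · B^{(i-1)}`. -/
noncomputable def netB (d : ℕ → ℕ)
    (W : ∀ i : ℕ, Matrix (Fin (d (i + 1))) (Fin (d i)) ℝ)
    (b : ∀ i : ℕ, Fin (d (i + 1)) → ℝ)
    (σ : ℕ → ℝ → ℝ) (x : Fin (d 0) → ℝ) :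
    ∀ i : ℕ, Matrix (Fin (d (i + 1))) (Fin (d 0)) ℝ
  | 0 => W 0
  | i + 1 =>
      W (i + 1) * Matrix.diagonal (fun k => deriv (σ i) (netZ d W b σ x i k))
        * netB d W b σ x i


noncomputable def linF {n : ℕ} (c : Fin n → ℝ) : (Fin n → ℝ) →L[ℝ] ℝ :=
  ∑ m, c m • (ContinuousLinearMap.proj m : (Fin n → ℝ) →L[ℝ] ℝ)

lemma linF_apply {n : ℕ} (c v : Fin n → ℝ) : linF c v = ∑ m, c m * v m := by
  simp [linF]

lemma linF_single {n : ℕ} (c : Fin n → ℝ) (l : Fin n) : linF c (Pi.single l 1) = c l := by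
  simp [linF_apply, Pi.single_apply]

lemma mul_diag_mul_apply {a b c : ℕ} (A : Matrix (Fin a) (Fin b) ℝ) (f : Fin b → ℝ)
    (B : Matrix (Fin b) (Fin c) ℝ) (j : Fin a) (l : Fin c) :
    (A * Matrix.diagonal f * B) j l = ∑ m, A j m * f m * B m l := by
  simp [Matrix.mul_apply, Matrix.diagonal_apply, ite_mul, mul_ite, zero_mul, mul_zero, Finset.sum_ite_eq]

lemma netZ_hasFDerivAt (d : ℕ → ℕ)
    (W : ∀ i : ℕ, Matrix (Fin (d (i + 1))) (Fin (d i)) ℝ)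
    (b : ∀ i : ℕ, Fin (d (i + 1)) → ℝ)
    (σ : ℕ → ℝ → ℝ) (hσ : ∀ i, ContDiff ℝ 2 (σ i)) (y : Fin (d 0) → ℝ) :
    ∀ (i : ℕ) (j : Fin (d (i + 1))),
      HasFDerivAt (fun y' => netZ d W b σ y' i j)
        (linF (fun l => netB d W b σ y i j l)) y := by
  intro i
  induction i with
  | zero =>
    intro j
    have hfun : (fun y' => netZ d W b σ y' 0 j)
        = fun y' : Fin (d 0) → ℝ => (∑ l, W 0 j l * y' l) + b 0 j := by
      funext y'; simp [netZ, Matrix.mulVec, dotProduct]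
    rw [hfun]
    have : HasFDerivAt (fun y' : Fin (d 0) → ℝ => (∑ l, W 0 j l * y' l) + b 0 j)
        (∑ l, W 0 j l • (ContinuousLinearMap.proj l : (Fin (d 0) → ℝ) →L[ℝ] ℝ)) y :=
      (HasFDerivAt.fun_sum fun l _ =>
        HasFDerivAt.const_mul
          ((ContinuousLinearMap.proj l : (Fin (d 0) → ℝ) →L[ℝ] ℝ).hasFDerivAt) (W 0 j l)).add_const _
    exact this.congr_fderiv rfl
  | succ i ih =>
    intro j
    have hfun : (fun y' => netZ d W b σ y' (i + 1) j)
        = fun y' : Fin (d 0) → ℝ =>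
            (∑ m, W (i + 1) j m * σ i (netZ d W b σ y' i m)) + b (i + 1) j := by
      funext y'; simp [netZ, Matrix.mulVec, dotProduct]
    rw [hfun]
    have key : HasFDerivAt
        (fun y' : Fin (d 0) → ℝ =>
          (∑ m, W (i + 1) j m * σ i (netZ d W b σ y' i m)) + b (i + 1) j)
        (∑ m, W (i + 1) j m •
          (deriv (σ i) (netZ d W b σ y i m) • linF (fun l => netB d W b σ y i m l))) y := by
      refine HasFDerivAt.add_const _ ?_
      refine HasFDerivAt.fun_sum fun m _ => ?_
      refine HasFDerivAt.const_mul ?_ _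
      exact (((hσ i).differentiable (by norm_num)).differentiableAt.hasDerivAt).comp_hasFDerivAt y (ih m)
    refine key.congr_fderiv ?_
    ext v
    simp only [ContinuousLinearMap.sum_apply, ContinuousLinearMap.smul_apply, linF_apply,
      smul_eq_mul]
    have : ∀ l, netB d W b σ y (i + 1) j l
        = ∑ m, W (i + 1) j m * deriv (σ i) (netZ d W b σ y i m) * netB d W b σ y i m l := by
      intro l; rw [show netB d W b σ y (i+1) = _ from rfl]; exact mul_diag_mul_apply _ _ _ _ _
    simp only [this, Finset.sum_mul, Finset.mul_sum]
    rw [Finset.sum_comm]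
    exact Finset.sum_congr rfl fun m _ => Finset.sum_congr rfl fun l _ => by ring

lemma netB_hasFDerivAt (d : ℕ → ℕ)
    (W : ∀ i : ℕ, Matrix (Fin (d (i + 1))) (Fin (d i)) ℝ)
    (b : ∀ i : ℕ, Fin (d (i + 1)) → ℝ)
    (σ : ℕ → ℝ → ℝ) (hσ : ∀ i, ContDiff ℝ 2 (σ i)) (x : Fin (d 0) → ℝ)
    (F : ∀ k i : ℕ, Matrix (Fin (d (k + 1))) (Fin (d (i + 1))) ℝ)
    (hFbase : ∀ k : ℕ, F (k + 1) k = W (k + 1))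
    (hFstep : ∀ k i : ℕ, i < k →
      F (k + 1) i =
        W (k + 1) * Matrix.diagonal (fun m => deriv (σ k) (netZ d W b σ x k m)) * F k i) :
    ∀ (n : ℕ) (j : Fin (d (n + 1))) (l : Fin (d 0)),
      HasFDerivAt (fun y => netB d W b σ y n j l)
        (linF (fun k => (∑ p ∈ Finset.range n,
            (netB d W b σ x p)ᵀ
              * Matrix.diagonal
                  (fun m => F n p j m * deriv (deriv (σ p)) (netZ d W b σ x p m))
              * netB d W b σ x p) k l)) x := by
  have hσ' : ∀ i, Differentiable ℝ (deriv (σ i)) := by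
    intro i
    have h2 : ContDiff ℝ ((1 : ℕ) + (1 : ℕ) : ℕ) (σ i) := by exact_mod_cast hσ i
    have := ContDiff.iterate_deriv' 1 1 h2
    simpa using this.differentiable (by norm_num)
  intro n
  induction n with
  | zero =>
    intro j l
    have hfun : (fun y => netB d W b σ y 0 j l) = fun _ => W 0 j l := rfl
    rw [hfun]
    have h0 : linF (fun k => (∑ p ∈ Finset.range 0,
        (netB d W b σ x p)ᵀ
          * Matrix.diagonal (fun m => F 0 p j m * deriv (deriv (σ p)) (netZ d W b σ x p m))
          * netB d W b σ x p) k l) = 0 := by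
      ext v; simp [linF_apply]
    rw [h0]
    exact hasFDerivAt_const _ _
  | succ n ih =>
    intro j l
    have hfun : (fun y => netB d W b σ y (n + 1) j l)
        = fun y => ∑ m, (W (n + 1) j m * deriv (σ n) (netZ d W b σ y n m))
            * netB d W b σ y n m l := by
      funext y
      have hB : netB d W b σ y (n + 1)
          = W (n + 1) * Matrix.diagonal (fun m => deriv (σ n) (netZ d W b σ y n m))
              * netB d W b σ y n := rfl
      rw [hB, mul_diag_mul_apply]
    rw [hfun]
    have key : HasFDerivAt
        (fun y => ∑ m, (W (n + 1) j m * deriv (σ n) (netZ d W b σ y n m))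
            * netB d W b σ y n m l)
        (∑ m, ((W (n + 1) j m * deriv (σ n) (netZ d W b σ x n m)) •
            (linF (fun k => (∑ p ∈ Finset.range n,
              (netB d W b σ x p)ᵀ
                * Matrix.diagonal
                    (fun m' => F n p m m' * deriv (deriv (σ p)) (netZ d W b σ x p m'))
                * netB d W b σ x p) k l))
          + netB d W b σ x n m l •
            (W (n + 1) j m •
              (deriv (deriv (σ n)) (netZ d W b σ x n m) •
                linF (fun k => netB d W b σ x n m k))))) x := by
      refine HasFDerivAt.fun_sum fun m _ => ?_
      refine HasFDerivAt.mul ?_ (ih m l)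
      refine HasFDerivAt.const_mul ?_ _
      exact ((hσ' n (netZ d W b σ x n m)).hasDerivAt).comp_hasFDerivAt x
        (netZ_hasFDerivAt d W b σ hσ x n m)
    refine key.congr_fderiv ?_
    ext v
    simp only [ContinuousLinearMap.sum_apply, ContinuousLinearMap.add_apply,
      ContinuousLinearMap.smul_apply, linF_apply, smul_eq_mul]
    -- expand the RHS coefficient
    have hS : ∀ k, (∑ p ∈ Finset.range (n + 1),
        (netB d W b σ x p)ᵀ
          * Matrix.diagonal
              (fun m => F (n + 1) p j m * deriv (deriv (σ p)) (netZ d W b σ x p m))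
          * netB d W b σ x p) k l
        = (∑ m, (W (n + 1) j m * deriv (σ n) (netZ d W b σ x n m)) *
            (∑ p ∈ Finset.range n,
              (netB d W b σ x p)ᵀ
                * Matrix.diagonal
                    (fun m' => F n p m m' * deriv (deriv (σ p)) (netZ d W b σ x p m'))
                * netB d W b σ x p) k l)
          + ∑ m, netB d W b σ x n m l *
              (W (n + 1) j m * (deriv (deriv (σ n)) (netZ d W b σ x n m)
                * netB d W b σ x n m k)) := by
      intro k
      rw [Finset.sum_range_succ]
      simp only [Matrix.add_apply, Matrix.sum_apply]
      congr 1
      · -- the p < n part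
        simp only [Finset.mul_sum]
        rw [Finset.sum_comm]
        refine Finset.sum_congr rfl fun p hp => ?_
        have hp' : p < n := Finset.mem_range.mp hp
        simp only [hFstep n p hp', mul_diag_mul_apply, Matrix.transpose_apply]
        simp only [Finset.sum_mul, Finset.mul_sum]
        rw [Finset.sum_comm]
        refine Finset.sum_congr rfl fun m _ => Finset.sum_congr rfl fun a _ => ?_
        ring
      · -- the p = n part
        simp only [mul_diag_mul_apply, Matrix.transpose_apply, hFbase n]
        refine Finset.sum_congr rfl fun m _ => ?_
        ring
    simp only [hS, add_mul, Finset.sum_add_distrib, Finset.sum_mul, Finset.mul_sum]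
    congr 1
    · rw [Finset.sum_comm]
      refine Finset.sum_congr rfl fun m _ => Finset.sum_congr rfl fun k _ => by ring
    · rw [Finset.sum_comm]
      refine Finset.sum_congr rfl fun m _ => Finset.sum_congr rfl fun k _ => by ring

/-- Hessian of a feedforward neural network with `C²` activations
(with `N = M + 2 ≥ 2` layers), Lemma 1 of Singla–Feizi: for every output
coordinate `j`, the Hessian of `x ↦ z^{(N-1)}_j(x)` equals
`∑_{i=0}^{N-2} (B^{(i)})ᵀ · diag(F_j^{(N-1,i)} ⊙ σ''_i(z^{(i)})) · B^{(i)}`,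
where the matrices `F^{(k,i)}` satisfy `F^{(k,k-1)} = W^{(k)}` and
`F^{(k,i)} = W^{(k)} · diag(σ'_{k-1}(z^{(k-1)})) · F^{(k-1,i)}` for `i ≤ k-2`. -/
theorem network_hessian (M : ℕ) (d : ℕ → ℕ) (hd : ∀ i, 0 < d i)
    (W : ∀ i : ℕ, Matrix (Fin (d (i + 1))) (Fin (d i)) ℝ)
    (b : ∀ i : ℕ, Fin (d (i + 1)) → ℝ)
    (σ : ℕ → ℝ → ℝ) (hσ : ∀ i, ContDiff ℝ 2 (σ i))
    (x : Fin (d 0) → ℝ)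
    (F : ∀ k i : ℕ, Matrix (Fin (d (k + 1))) (Fin (d (i + 1))) ℝ)
    (hFbase : ∀ k : ℕ, F (k + 1) k = W (k + 1))
    (hFstep : ∀ k i : ℕ, i < k →
      F (k + 1) i =
        W (k + 1) * Matrix.diagonal (fun m => deriv (σ k) (netZ d W b σ x k m)) * F k i) :
    ∀ (j : Fin (d (M + 2))) (k l : Fin (d 0)),
      fderiv ℝ (fun y => fderiv ℝ (fun y' => netZ d W b σ y' (M + 1) j) y (Pi.single l 1))
          x (Pi.single k 1)
        = (∑ i ∈ Finset.range (M + 1),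
            (netB d W b σ x i)ᵀ
              * Matrix.diagonal
                  (fun m => F (M + 1) i j m * deriv (deriv (σ i)) (netZ d W b σ x i m))
              * netB d W b σ x i) k l := by
  intro j k l
  have hinner : (fun y => fderiv ℝ (fun y' => netZ d W b σ y' (M + 1) j) y (Pi.single l 1))
      = fun y => netB d W b σ y (M + 1) j l := by
    funext y
    rw [(netZ_hasFDerivAt d W b σ hσ y (M + 1) j).fderiv, linF_single]
  rw [hinner,
    (netB_hasFDerivAt d W b σ hσ x F hFbase hFstep (M + 1) j l).fderiv, linF_single]
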